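/- Let τ(x_0,…,x_{k-1}) be a Boolean term and D a κ-complete filter on [λ]^k. If ⟨B_ζ : ζ < θ⟩ is a family of fewer than κ Boolean algebras each having the (D,τ)-dependence property, then any reduced product ∏_{ζ<θ} B_ζ / E (for a filter E on θ), in particular the full product and any ultraproduct, has the (D,τ)-dependence property. -/

import Mathlib

open Cardinal

/-- Boolean terms in `k` variables. -/
inductive BTerm (k : ℕ) : Type where
  | var : Fin k → BTerm k
  | bot : BTerm k
  | top : BTerm k
  | inf : BTerm k → BTerm k → BTerm k
  | sup : BTerm k → BTerm k → BTerm k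
  | compl : BTerm k → BTerm k

/-- Evaluation of a Boolean term at an assignment of the variables. -/
def BTerm.eval {k : ℕ} {A : Type u} [BooleanAlgebra A] (v : Fin k → A) :
    BTerm k → A
  | .var i => v i
  | .bot => ⊥
  | .top => ⊤
  | .inf a b => a.eval v ⊓ b.eval v
  | .sup a b => a.eval v ⊔ b.eval v
  | .compl a => (a.eval v)ᶜ

/-- A filter is `κ`-complete: closed under intersections of fewer than `κ` of
its members. -/
def KappaComplete {E : Type u} (D : Filter E) (κ : Cardinal.{u}) : Prop :=
  ∀ S : Set (Set E), (∀ s ∈ S, s ∈ D) → #S < κ → ⋂₀ S ∈ D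

/-- `B` has the `(D,τ)`-dependence property: for every `λ`-sequence
`⟨a_i : i < λ⟩` in `B` there is `A ∈ D` such that
`τ(a_{α_0},…,a_{α_{k-1}}) = 0` for every `{α_0 < … < α_{k-1}} ∈ A`. -/
def DepProp {O : Type u} [LinearOrder O] {k : ℕ}
    (D : Filter {w : Finset O // w.card = k}) (τ : BTerm k)
    (B : Type v) [BooleanAlgebra B] : Prop :=
  ∀ a : O → B, ∃ A ∈ D, ∀ w ∈ A,
    BTerm.eval (fun ℓ => a ((Subtype.val w).orderIsoOfFin w.2 ℓ)) τ = ⊥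

/-- If `τ` is a Boolean term, `D` a `κ`-complete filter on `[λ]^k`, and
`⟨B_ζ : ζ < θ⟩` (with `θ < κ`) are Boolean algebras each having the
`(D,τ)`-dependence property, then any reduced product `∏_ζ B_ζ / F` has the
`(D,τ)`-dependence property (stated via representatives: a Boolean
combination is `0` in the reduced product iff it is `0` on an `F`-large set
of coordinates). -/
theorem stmt16 (lam κ : Cardinal.{u}) (k : ℕ) (τ : BTerm k)
    (D : Filter {w : Finset lam.ord.ToType // w.card = k})
    (hD : KappaComplete D κ)
    {θ : Type u} (hθ : #θ < κ) (B : θ → Type u) [∀ ζ, BooleanAlgebra (B ζ)]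
    (hdep : ∀ ζ, DepProp D τ (B ζ)) (F : Filter θ) :
    ∀ a : lam.ord.ToType → (∀ ζ, B ζ), ∃ A ∈ D, ∀ w ∈ A,
      {ζ | BTerm.eval
        (fun ℓ => a ((Subtype.val w).orderIsoOfFin w.2 ℓ) ζ) τ = ⊥} ∈ F := by
  intro a
  choose A hA hA2 using fun ζ => hdep ζ (fun i => a i ζ)
  refine ⟨⋂₀ Set.range A, hD _ ?_ (lt_of_le_of_lt Cardinal.mk_range_le hθ), ?_⟩
  · rintro s ⟨ζ, rfl⟩; exact hA ζ
  · intro w hw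
    exact Filter.univ_mem' fun ζ => hA2 ζ w (hw _ ⟨ζ, rfl⟩)
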